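/- Any cycle σ_l = (1,2,…,l) in S_n can be written using only σ_n, σ_n^{−1}, and the transposition τ = (1,n) as σ_l = σ_n · (σ_n^{−1}·τ)^{n−l} · σ_n^{n−l}, a word of length 3(n−l)+1 in these generators. Consequently, the word distance of σ_l from the identity in the Cayley graph of S_n with generating set {σ_n, σ_n^{−1}, τ} is at most 3(n−l)+1. -/

import Mathlib

open Equiv Equiv.Perm Fin.NatCast Fin.CommRing

lemma pow_finRotate_apply (N k : ℕ) (x : Fin (N+1)) :
    ((finRotate (N+1)) ^ k) x = x + (k : Fin (N+1)) := by
  induction k with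
  | zero => simp
  | succ k ih =>
      rw [pow_succ', Equiv.Perm.mul_apply, ih, finRotate_succ_apply]
      push_cast
      ring

lemma pow_cycleRange_last_apply (N k : ℕ) (x : Fin (N+1)) :
    ((Fin.cycleRange (Fin.last N)) ^ k) x = x + (k : Fin (N+1)) := by
  rw [Fin.cycleRange_last]; exact pow_finRotate_apply N k x

lemma step_lemma (N i : ℕ) (hi : i + 1 ≤ N) :
    Fin.cycleRange (⟨i+1, by omega⟩ : Fin (N+1)) *
      Equiv.swap (⟨i, by omega⟩ : Fin (N+1)) ⟨i+1, by omega⟩ =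
    Fin.cycleRange ⟨i, by omega⟩ := by
  ext j
  simp only [Equiv.Perm.mul_apply]
  rcases lt_trichotomy (j : ℕ) i with h | h | h
  · rw [Equiv.swap_apply_of_ne_of_ne (by simp [Fin.ext_iff]; omega) (by simp [Fin.ext_iff]; omega)]
    rw [Fin.cycleRange_of_lt (by simp [Fin.lt_def]; omega),
        Fin.cycleRange_of_lt (by simp [Fin.lt_def]; omega)]
  · have hj : j = ⟨i, by omega⟩ := by simp [Fin.ext_iff, h]
    rw [hj, Equiv.swap_apply_left, Fin.cycleRange_self, Fin.cycleRange_self]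
  · rcases eq_or_lt_of_le (Nat.succ_le_of_lt h) with h' | h'
    · have hj : j = ⟨i+1, by omega⟩ := by simp [Fin.ext_iff]; omega
      rw [hj, Equiv.swap_apply_right, Fin.cycleRange_of_lt (by simp [Fin.lt_def]),
          Fin.cycleRange_of_gt (by simp [Fin.lt_def])]
      simp [Fin.ext_iff, Fin.add_def, Nat.mod_eq_of_lt (show i + 1 < N + 1 by omega)]
    · rw [Equiv.swap_apply_of_ne_of_ne (by simp [Fin.ext_iff]; omega) (by simp [Fin.ext_iff]; omega)]
      rw [Fin.cycleRange_of_gt (by simp [Fin.lt_def]; omega),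
          Fin.cycleRange_of_gt (by simp [Fin.lt_def]; omega)]

lemma key_lemma (N : ℕ) (k : ℕ) (hk : k ≤ N) :
    (Fin.cycleRange (Fin.last N)) *
      ((Fin.cycleRange (Fin.last N))⁻¹ * Equiv.swap (0 : Fin (N+1)) (Fin.last N)) ^ k *
      (Fin.cycleRange (Fin.last N)) ^ k = Fin.cycleRange ⟨N - k, by omega⟩ := by
  induction k with
  | zero =>
      simp only [pow_zero, mul_one]
      rfl
  | succ k ih =>
      set s := Fin.cycleRange (Fin.last N) with hs
      set τ := Equiv.swap (0 : Fin (N+1)) (Fin.last N) with hτ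
      clear_value s τ
      have hkN : k ≤ N := by omega
      have hinv : (s ^ (k+1))⁻¹ = (s^k)⁻¹ * s⁻¹ := by
        rw [pow_succ', mul_inv_rev]
      have hrw : s * (s⁻¹ * τ) ^ (k+1) * s ^ (k+1)
          = (s * (s⁻¹ * τ) ^ k * s ^ k) * ((s ^ (k+1))⁻¹ * τ * s ^ (k+1)) := by
        rw [pow_succ (s⁻¹ * τ) k, hinv]
        simp [mul_assoc]
      rw [hrw, ih hkN]
      have hv : ((((k:ℕ)+1 : ℕ) : Fin (N+1)) : ℕ) = k + 1 := by
        rw [Fin.val_natCast]; exact Nat.mod_eq_of_lt (by omega)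
      have h1 : (s ^ (k+1)) (⟨N - k, by omega⟩ : Fin (N+1)) = 0 := by
        have hv2 : (N - k + ((((k:ℕ)+1 : ℕ) : Fin (N+1))).val) % (N+1) = 0 := by
          rw [hv, show N - k + (k+1) = N + 1 by omega, Nat.mod_self]
        rw [hs, pow_cycleRange_last_apply, Fin.ext_iff, Fin.add_def]
        exact hv2
      have h2 : (s ^ (k+1)) (⟨N - (k+1), by omega⟩ : Fin (N+1)) = Fin.last N := by
        have hv2 : (N - (k+1) + ((((k:ℕ)+1 : ℕ) : Fin (N+1))).val) % (N+1) = N := by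
          rw [hv, show N - (k+1) + (k+1) = N by omega]
          exact Nat.mod_eq_of_lt (by omega)
        rw [hs, pow_cycleRange_last_apply, Fin.ext_iff, Fin.add_def]
        exact hv2
      have h1' : ((s ^ (k+1))⁻¹) (0 : Fin (N+1)) = ⟨N - k, by omega⟩ :=
        Equiv.Perm.inv_eq_iff_eq.mpr h1.symm
      have h2' : ((s ^ (k+1))⁻¹) (Fin.last N) = ⟨N - (k+1), by omega⟩ :=
        Equiv.Perm.inv_eq_iff_eq.mpr h2.symm
      have hconj := Equiv.swap_apply_apply ((s ^ (k+1))⁻¹) (0 : Fin (N+1)) (Fin.last N)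
      simp only [h1', h2', inv_inv] at hconj
      rw [hτ, ← hconj, Equiv.swap_comm]
      have hNk : (⟨N - k, by omega⟩ : Fin (N+1)) = ⟨(N - (k+1)) + 1, by omega⟩ := by
        simp only [Fin.mk.injEq]; omega
      rw [hNk]
      exact step_lemma N (N - (k+1)) (by omega)

theorem stmt18 (n : ℕ) (hn : 2 ≤ n) (l : ℕ) (hl1 : 1 ≤ l) (hln : l ≤ n)
    (σ : ℕ → Equiv.Perm (Fin n))
    (hσ : ∀ m (h1 : 1 ≤ m) (h2 : m ≤ n), σ m = Fin.cycleRange ⟨m - 1, by omega⟩)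
    (τ : Equiv.Perm (Fin n))
    (hτ : τ = Equiv.swap ⟨0, by omega⟩ ⟨n - 1, by omega⟩) :
    σ l = σ n * ((σ n)⁻¹ * τ) ^ (n - l) * (σ n) ^ (n - l) ∧
    sInf {m : ℕ | ∃ δ : List (Equiv.Perm (Fin n)),
        (∀ s ∈ δ, s = σ n ∨ s = (σ n)⁻¹ ∨ s = τ) ∧ δ.prod = σ l ∧ δ.length = m}
      ≤ 3 * (n - l) + 1 := by
  obtain ⟨N, rfl⟩ : ∃ N, n = N + 1 := ⟨n - 1, by omega⟩
  have hmain : σ l = σ (N+1) * ((σ (N+1))⁻¹ * τ) ^ (N+1 - l) * (σ (N+1)) ^ (N+1 - l) := by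
    rw [hσ l hl1 hln, hσ (N+1) (by omega) le_rfl, hτ]
    have h0 : (⟨N + 1 - 1, by omega⟩ : Fin (N+1)) = Fin.last N := rfl
    have h1 : (⟨0, by omega⟩ : Fin (N+1)) = 0 := rfl
    rw [h0, h1]
    have hkey := key_lemma N (N + 1 - l) (by omega)
    have h3 : (⟨N - (N + 1 - l), by omega⟩ : Fin (N+1)) = ⟨l - 1, by omega⟩ := by
      simp only [Fin.mk.injEq]; omega
    rw [h3] at hkey
    exact hkey.symm
  refine ⟨hmain, ?_⟩
  apply Nat.sInf_le
  refine ⟨[σ (N+1)] ++ (List.replicate (N+1-l) [(σ (N+1))⁻¹, τ]).flatten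
      ++ List.replicate (N+1-l) (σ (N+1)), ?_, ?_, ?_⟩
  · intro s hs
    simp only [List.mem_append, List.mem_flatten, List.mem_replicate, List.mem_singleton] at hs
    rcases hs with (hs | ⟨t, ⟨-, rfl⟩, hs⟩) | hs
    · exact Or.inl hs
    · simp only [List.mem_cons, List.mem_singleton, List.not_mem_nil, or_false] at hs
      tauto
    · exact Or.inl hs.2
  · rw [List.prod_append, List.prod_append, List.prod_flatten, List.map_replicate,
        List.prod_replicate, List.prod_replicate]
    simp only [List.prod_singleton, List.prod_cons, List.prod_nil, mul_one]
    exact hmain.symm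
  · simp [List.length_flatten, List.map_replicate]
    omega
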